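/- Suppose q*, λ*, ν* satisfy the KKT conditions for SYSTEM: q* is feasible, −U_n'(q_n*) + (Σ_{S∋n} λ_S*)/p_n − ν_n* = 0 for all n, complementary slackness λ_S*(Σ_{i∈S} q_i*/p_i − (τ−I_S)) = 0 and ν_n* q_n* = 0, with λ_S*, ν_n* ≥ 0. Define ψ_n = (Σ_{S∋n} λ_S*)/p_n and ρ_n = ψ_n q_n*. Then for every n with ψ_n > 0, ρ_n maximizes U_n(ρ/ψ_n) − ρ over ρ ∈ [0, ψ_n]... in particular ρ_n satisfies the KKT conditions of the CLIENT_n problem with multiplier ξ_n = ν_n*/ψ_n. -/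

import Mathlib

open Finset

/-- First half of Theorem 2: a KKT point of SYSTEM yields solutions of the CLIENT
problems.  Suppose `(q, λ, ν)` satisfies the KKT conditions of SYSTEM.  Define
`ψ n = (∑_{S ∋ n} λ_S) / p n` and `ρ n = ψ n * q n`.  Then for every `n` with
`ψ n > 0`, the point `ρ n` satisfies the KKT conditions of CLIENT_n with multiplier
`ξ n = ν n / ψ n`, and `ρ n` maximizes `U_n(ρ/ψ_n) - ρ` over `ρ ∈ [0, ψ n]`.
(The utility `U n`, with derivative `U' n` on `[0,1]`, is strictly increasing,
strictly concave and continuously differentiable; the right limit at `0` is assumed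
finite so that `U n` is defined on `[0,1]`.) -/

lemma concave_tangent_le {S : Set ℝ} {f : ℝ → ℝ} {f' x y : ℝ}
    (hfc : ConcaveOn ℝ S f) (hx : x ∈ S) (hy : y ∈ S)
    (hd : HasDerivWithinAt f f' S x) :
    f y ≤ f x + f' * (y - x) := by
  rcases lt_trichotomy x y with h | h | h
  · have := hfc.slope_le_of_hasDerivWithinAt hx hy h hd
    rw [slope_def_field, div_le_iff₀ (by linarith)] at this
    linarith
  · subst h; simp
  · have := hfc.le_slope_of_hasDerivWithinAt hy hx h hd
    rw [slope_def_field, le_div_iff₀ (by linarith)] at this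
    linarith

theorem stmt_3 (N : ℕ) (τ : ℝ) (p : Fin N → ℝ) (I : Finset (Fin N) → ℝ)
    (hp : ∀ n, 0 < p n ∧ p n ≤ 1)
    (U U' : Fin N → ℝ → ℝ)
    (hUmono : ∀ n, StrictMonoOn (U n) (Set.Icc 0 1))
    (hUconc : ∀ n, StrictConcaveOn ℝ (Set.Icc 0 1) (U n))
    (hUderiv : ∀ n, ∀ x ∈ Set.Icc (0:ℝ) 1, HasDerivWithinAt (U n) (U' n x) (Set.Icc 0 1) x)
    (q : Fin N → ℝ) (lam : Finset (Fin N) → ℝ) (ν : Fin N → ℝ)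
    -- q* is feasible (delivery ratios lie in [0,1])
    (hq0 : ∀ n, 0 ≤ q n) (hq1 : ∀ n, q n ≤ 1)
    (hfeas : ∀ S : Finset (Fin N), ∑ i ∈ S, q i / p i ≤ τ - I S)
    -- stationarity
    (hstat : ∀ n, -U' n (q n) + (∑ S : Finset (Fin N), if n ∈ S then lam S else 0) / p n
      - ν n = 0)
    -- complementary slackness
    (hcs1 : ∀ S : Finset (Fin N), lam S * ((∑ i ∈ S, q i / p i) - (τ - I S)) = 0)
    (hcs2 : ∀ n, ν n * q n = 0)
    -- dual feasibility
    (hlam : ∀ S, 0 ≤ lam S) (hν : ∀ n, 0 ≤ ν n)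
    (ψ ρ : Fin N → ℝ)
    (hψ : ∀ n, ψ n = (∑ S : Finset (Fin N), if n ∈ S then lam S else 0) / p n)
    (hρ : ∀ n, ρ n = ψ n * q n) :
    ∀ n, 0 < ψ n →
      ((-(1 / ψ n) * U' n (ρ n / ψ n) + 1 - ν n / ψ n = 0) ∧
        (ν n / ψ n) * ρ n = 0 ∧ 0 ≤ ν n / ψ n) ∧
      ∀ r ∈ Set.Icc (0:ℝ) (ψ n), U n (r / ψ n) - r ≤ U n (ρ n / ψ n) - ρ n := by
  intro n hψn
  have hpn := (hp n).1
  have hqmem : q n ∈ Set.Icc (0:ℝ) 1 := ⟨hq0 n, hq1 n⟩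
  have hstatn := hstat n
  rw [← hψ n] at hstatn
  -- U' n (q n) = ψ n - ν n
  have hU'eq : U' n (q n) = ψ n - ν n := by linarith
  have hρq : ρ n / ψ n = q n := by rw [hρ n]; field_simp
  constructor
  · refine ⟨?_, ?_, div_nonneg (hν n) hψn.le⟩
    · rw [hρq, hU'eq]; field_simp; ring
    · have h := hcs2 n
      rw [hρ n]; field_simp; nlinarith
  · intro r hr
    rw [hρq, hρ n]
    set y := r / ψ n with hy
    have hymem : y ∈ Set.Icc (0:ℝ) 1 := by
      constructor
      · exact div_nonneg hr.1 hψn.le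
      · rw [div_le_one hψn]; exact hr.2
    have hry : r = ψ n * y := by rw [hy]; field_simp
    have htan : U n y ≤ U n (q n) + U' n (q n) * (y - q n) :=
      concave_tangent_le (hUconc n).concaveOn hqmem hymem (hUderiv n (q n) hqmem)
    have hνq : ν n * q n = 0 := hcs2 n
    have hνy : 0 ≤ ν n * y := mul_nonneg (hν n) hymem.1
    rw [hU'eq] at htan
    rw [hry]
    nlinarith
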